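/- Let 𝒫 be a naturally labeled poset on [n] and s positive integers. For every positive integer k and every λ ∈ k·O(𝒫,s) ∩ ℤ^n, there exist λ^(1) ⊴ λ^(2) ⊴ ... ⊴ λ^(k), all in O(𝒫,s) ∩ ℤ^n, with λ = λ^(1) + ... + λ^(k), where λ ⊴ γ means λ_i ≤ γ_i for all i and γ_i = s_i whenever λ_i ≠ 0. -/

import Mathlib

/-- The s-lecture hall order polytope `O(𝒫,s)` for a poset with order relation `r` on `Fin n`. -/
def LHOrderPolytope (n : ℕ) (r : Fin n → Fin n → Prop) (s : Fin n → ℤ) : Set (Fin n → ℝ) :=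
  {x | (∀ i j : Fin n, r i j → x i / (s i : ℝ) ≤ x j / (s j : ℝ)) ∧
       (∀ i : Fin n, 0 ≤ x i ∧ x i ≤ (s i : ℝ))}

/-- The dilate `k·P`. -/
def dilate {n : ℕ} (k : ℝ) (P : Set (Fin n → ℝ)) : Set (Fin n → ℝ) :=
  (fun p => k • p) '' P

/-- The relation `λ ⊴ γ`: `λ i ≤ γ i` for all `i`, and `γ i = s i` whenever `λ i ≠ 0`. -/
def trile {n : ℕ} (s lam gam : Fin n → ℤ) : Prop :=
  (∀ i, lam i ≤ gam i) ∧ ∀ i, lam i ≠ 0 → gam i = s i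

lemma clamp_sum (s : ℤ) (hs : 0 < s) : ∀ (k : ℕ) (a : ℤ), 0 ≤ a → a ≤ (k:ℤ) * s →
    ∑ j ∈ Finset.range k, min s (max 0 (a - (j:ℤ) * s)) = a := by
  intro k
  induction k with
  | zero => intro a h0 h1; simp at h1 ⊢; omega
  | succ k ih =>
    intro a h0 h1
    rw [Finset.sum_range_succ']
    by_cases hca : a ≤ s
    · have hz : ∀ j ∈ Finset.range k, min s (max 0 (a - ((j:ℤ)+1) * s)) = 0 := by
        intro j hj
        have hj0 : (0:ℤ) ≤ (j:ℤ) := Int.ofNat_nonneg j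
        have ht : a - ((j:ℤ)+1)*s ≤ 0 := by nlinarith
        set t := a - ((j:ℤ)+1)*s with htdef
        omega
      rw [Finset.sum_congr rfl (by intro j hj; push_cast; exact hz j hj)]
      simp
      omega
    · have hrw : ∀ j : ℕ, a - ((j:ℤ)+1) * s = (a - s) - (j:ℤ) * s := by intro j; ring
      have hih := ih (a - s) (by omega) (by push_cast at h1 ⊢; linarith)
      rw [Finset.sum_congr rfl (fun j hj => by push_cast; rw [hrw j])]
      rw [hih]
      simp
      omega

lemma keyineq (si sj u v c : ℤ) (hsi : 0 < si) (hsj : 0 < sj)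
    (huv : u * sj ≤ v * si) :
    min si (max 0 (u - c * si)) * sj ≤ min sj (max 0 (v - c * sj)) * si := by
  rw [min_mul_of_nonneg _ _ hsj.le, max_mul_of_nonneg _ _ hsj.le,
      min_mul_of_nonneg _ _ hsi.le, max_mul_of_nonneg _ _ hsi.le]
  simp only [zero_mul]
  refine min_le_min (mul_comm si sj).le (max_le_max le_rfl ?_)
  nlinarith

theorem exists_chain_decomposition
    (n : ℕ) (r : Fin n → Fin n → Prop) (hpo : IsPartialOrder (Fin n) r)
    (hnat : ∀ i j : Fin n, r i j → i ≤ j)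
    (s : Fin n → ℤ) (hs : ∀ i, 0 < s i)
    (k : ℕ) (hk : 0 < k) (lam : Fin n → ℤ)
    (hlam : (fun i => (lam i : ℝ)) ∈ dilate (k : ℝ) (LHOrderPolytope n r s)) :
    ∃ f : Fin k → (Fin n → ℤ),
      (∀ m : Fin k, (fun i => ((f m i : ℤ) : ℝ)) ∈ LHOrderPolytope n r s) ∧
      (∀ m m' : Fin k, m < m' → trile s (f m) (f m')) ∧
      lam = ∑ m : Fin k, f m := by
  obtain ⟨x, hxP, hxe⟩ := hlam
  have hk0 : (0:ℝ) < k := by exact_mod_cast hk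
  have hxeq : ∀ i, (k:ℝ) * x i = (lam i : ℝ) := by
    intro i
    have := congrFun hxe i
    simpa [Pi.smul_apply, smul_eq_mul] using this
  have hsR : ∀ i, (0:ℝ) < (s i : ℝ) := fun i => by exact_mod_cast hs i
  have hlb : ∀ i, 0 ≤ lam i := by
    intro i
    have h := (hxP.2 i).1
    have : (0:ℝ) ≤ (lam i:ℝ) := by rw [← hxeq i]; exact mul_nonneg hk0.le h
    exact_mod_cast this
  have hub : ∀ i, lam i ≤ (k:ℤ) * s i := by
    intro i
    have h := (hxP.2 i).2
    have : (lam i:ℝ) ≤ (k:ℝ) * s i := by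
      rw [← hxeq i]; exact mul_le_mul_of_nonneg_left h hk0.le
    exact_mod_cast this
  have hcross : ∀ i j, r i j → lam i * s j ≤ lam j * s i := by
    intro i j hij
    have h := hxP.1 i j hij
    rw [div_le_div_iff₀ (hsR i) (hsR j)] at h
    have h2 : (k:ℝ) * x i * (s j:ℝ) ≤ (k:ℝ) * x j * (s i:ℝ) := by nlinarith
    rw [hxeq i, hxeq j] at h2
    exact_mod_cast h2
  refine ⟨fun m i => min (s i) (max 0 (lam i - ((k - 1 - (m:ℕ) : ℕ) : ℤ) * s i)), ?_, ?_, ?_⟩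
  · intro m
    constructor
    · intro i j hij
      dsimp only
      rw [div_le_div_iff₀ (hsR i) (hsR j)]
      exact_mod_cast keyineq (s i) (s j) (lam i) (lam j) ((k - 1 - (m:ℕ) : ℕ) : ℤ) (hs i) (hs j) (hcross i j hij)
    · intro i
      dsimp only
      constructor
      · have : (0:ℤ) ≤ min (s i) (max 0 (lam i - ((k - 1 - (m:ℕ) : ℕ) : ℤ) * s i)) :=
          le_min (hs i).le (le_max_left _ _)
        exact_mod_cast this
      · have : min (s i) (max 0 (lam i - ((k - 1 - (m:ℕ) : ℕ) : ℤ) * s i)) ≤ s i :=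
          min_le_left _ _
        exact_mod_cast this
  · intro m m' hmm'
    have h1 : (m:ℕ) < (m':ℕ) := hmm'
    have h2 : (m':ℕ) < k := m'.isLt
    have hcc : (k - 1 - (m':ℕ) : ℕ) + 1 ≤ (k - 1 - (m:ℕ) : ℕ) := by omega
    have hccZ : ((k - 1 - (m':ℕ) : ℕ) : ℤ) + 1 ≤ ((k - 1 - (m:ℕ) : ℕ) : ℤ) := by
      exact_mod_cast hcc
    have hmain : ∀ i, ((k - 1 - (m':ℕ) : ℕ) : ℤ) * s i + s i ≤ ((k - 1 - (m:ℕ) : ℕ) : ℤ) * s i := by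
      intro i
      have := mul_le_mul_of_nonneg_right hccZ (hs i).le
      nlinarith
    constructor
    · intro i
      dsimp only
      have hm := hmain i
      set p := ((k - 1 - (m:ℕ) : ℕ) : ℤ) * s i with hp
      set q := ((k - 1 - (m':ℕ) : ℕ) : ℤ) * s i with hq
      have := hs i
      omega
    · intro i hne
      dsimp only at hne ⊢
      have hm := hmain i
      set p := ((k - 1 - (m:ℕ) : ℕ) : ℤ) * s i with hp
      set q := ((k - 1 - (m':ℕ) : ℕ) : ℤ) * s i with hq
      have := hs i
      omega
  · funext i
    rw [Finset.sum_apply]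
    have h1 : ∑ m : Fin k, min (s i) (max 0 (lam i - ((k - 1 - (m:ℕ) : ℕ) : ℤ) * s i))
        = ∑ j ∈ Finset.range k, min (s i) (max 0 (lam i - ((k - 1 - j : ℕ) : ℤ) * s i)) :=
      Fin.sum_univ_eq_sum_range (fun j => min (s i) (max 0 (lam i - ((k - 1 - j : ℕ) : ℤ) * s i))) k
    have h2 := Finset.sum_range_reflect
      (fun j => min (s i) (max 0 (lam i - (j : ℤ) * s i))) k
    rw [h1]
    exact (h2.trans (clamp_sum (s i) (hs i) k (lam i) (hlb i) (hub i))).symm
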